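/- Let n ≥ 1, let μ be a probability measure on ℝ, and let p* : ℝ → [0,1] be a measurable function giving the probability that the initial choice is 0 given α. In the binary AR(1) logit model, define the n-periods forward average marginal effect AME^{(n)} = ∫ (Λ(α+β) − Λ(α))^n dμ(α). Let (0, (1,0)^n) denote the (2n+1)-period history beginning with 0 followed by n repetitions of (1,0), and ((1,0)^n, 1) the (2n+1)-period history consisting of n repetitions of (1,0) followed by 1. Then: AME^{(n)} = (e^β − 1)^n · ( P_{0,(1,0)^n} + P_{(1,0)^n,1} ), where P_{0,(1,0)^n} = ∫ p*(α) · (π_{01}(α) π_{10}(α))^n dμ(α) and P_{(1,0)^n,1} = ∫ (1 − p*(α)) · (π_{10}(α) π_{01}(α))^n dμ(α). (Proposition 2.) -/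

import Mathlib

open MeasureTheory

/-- The logistic function `Λ(u) = e^u / (1 + e^u)`. -/
noncomputable def logistic (u : ℝ) : ℝ := Real.exp u / (1 + Real.exp u)

lemma logistic_nonneg (u : ℝ) : 0 ≤ logistic u := by
  unfold logistic
  positivity

lemma logistic_le_one (u : ℝ) : logistic u ≤ 1 := by
  unfold logistic
  rw [div_le_one (by positivity)]
  linarith

lemma logistic_continuous : Continuous logistic := by
  unfold logistic
  exact Real.continuous_exp.div (by continuity) (fun u => by positivity)

lemma key_identity (β α : ℝ) :
    logistic (α + β) - logistic α
      = (Real.exp β - 1) * (logistic α * (1 - logistic (α + β))) := by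
  unfold logistic
  have h1 : (0:ℝ) < 1 + Real.exp α := by positivity
  have h2 : (0:ℝ) < 1 + Real.exp (α + β) := by positivity
  rw [Real.exp_add]
  field_simp
  ring

/-- Proposition 2: in the binary AR(1) logit model, for `n ≥ 1` the
`n`-periods forward average marginal effect
`AME⁽ⁿ⁾ = ∫ (Λ(α+β) − Λ(α))^n dμ(α)` satisfies
`AME⁽ⁿ⁾ = (e^β − 1)^n · (P_{0,(1,0)^n} + P_{(1,0)^n,1})`, where
`P_{0,(1,0)^n} = ∫ p*(α) · (π01(α) π10(α))^n dμ(α)` and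
`P_{(1,0)^n,1} = ∫ (1 − p*(α)) · (π10(α) π01(α))^n dμ(α)`,
with `π01(α) = Λ(α)` and `π10(α) = 1 − Λ(α+β)`. -/
theorem prop2_AME_n (β : ℝ) (n : ℕ) (hn : 1 ≤ n)
    (μ : Measure ℝ) [IsProbabilityMeasure μ]
    (pstar : ℝ → ℝ) (hmeas : Measurable pstar)
    (h0 : ∀ α, 0 ≤ pstar α) (h1 : ∀ α, pstar α ≤ 1) :
    (∫ α, (logistic (α + β) - logistic α) ^ n ∂μ)
      = (Real.exp β - 1) ^ n
        * ((∫ α, pstar α * (logistic α * (1 - logistic (α + β))) ^ n ∂μ)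
            + ∫ α, (1 - pstar α) * ((1 - logistic (α + β)) * logistic α) ^ n ∂μ) := by
  set f : ℝ → ℝ := fun α => (logistic α * (1 - logistic (α + β))) ^ n with hf
  have hfbound : ∀ α, 0 ≤ f α ∧ f α ≤ 1 := by
    intro α
    have ha := logistic_nonneg α
    have hb := logistic_le_one α
    have hc := logistic_nonneg (α + β)
    have hd := logistic_le_one (α + β)
    have he : 0 ≤ logistic α * (1 - logistic (α + β)) :=
      mul_nonneg ha (by linarith)
    constructor
    · exact pow_nonneg he n
    · apply pow_le_one₀ he
      calc logistic α * (1 - logistic (α + β)) ≤ 1 * 1 := by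
            apply mul_le_mul hb (by linarith) (by linarith) one_pos.le
        _ = 1 := one_mul 1
  have hfmeas : Measurable f := by
    apply Measurable.pow_const
    exact (logistic_continuous.measurable).mul
      ((measurable_const.sub ((logistic_continuous.measurable).comp
        (measurable_id.add_const β))))
  have hint : ∀ (g : ℝ → ℝ), Measurable g → (∀ α, |g α| ≤ 1) →
      Integrable (fun α => g α * f α) μ := by
    intro g hg hgb
    apply Integrable.mono' (integrable_const (1:ℝ))
      ((hg.mul hfmeas).aestronglyMeasurable)
    filter_upwards with α
    have := hfbound α
    rw [Real.norm_eq_abs, Pi.mul_apply, abs_mul, abs_of_nonneg this.1]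
    calc |g α| * f α ≤ 1 * 1 := mul_le_mul (hgb α) this.2 this.1 one_pos.le
      _ = 1 := one_mul 1
  have hint1 : Integrable (fun α => pstar α * f α) μ :=
    hint pstar hmeas (fun α => abs_le.2 ⟨by linarith [h0 α], h1 α⟩)
  have hint2 : Integrable (fun α => (1 - pstar α) * f α) μ :=
    hint _ (measurable_const.sub hmeas)
      (fun α => abs_le.2 ⟨by linarith [h1 α], by linarith [h0 α]⟩)
  have hLHS : (∫ α, (logistic (α + β) - logistic α) ^ n ∂μ)
      = (Real.exp β - 1) ^ n * ∫ α, f α ∂μ := by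
    rw [← integral_const_mul]
    congr 1
    funext α
    rw [key_identity, mul_pow]
  have hcomm : (∫ α, (1 - pstar α) * ((1 - logistic (α + β)) * logistic α) ^ n ∂μ)
      = ∫ α, (1 - pstar α) * f α ∂μ := by
    congr 1; funext α; rw [hf]; ring_nf
  rw [hLHS, hcomm, ← integral_add hint1 hint2]
  congr 1
  apply integral_congr_ae
  filter_upwards with α
  ring
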